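/- Let R̂ = ℝ[[x,y,z,w]]/(x² + y² − (w+1)z²) and P = (x,y,z). Then [R̂/PR̂] = 0 in the Grothendieck group G(R̂) of finitely generated R̂-modules. -/

import Mathlib

/-!
Statement 6: for `R̂ = ℝ[[x,y,z,w]]/(x² + y² − (w+1)z²)` and `P = (x,y,z)`, one has
`[R̂/PR̂] = 0` in the Grothendieck group `G(R̂)` of finitely generated `R̂`-modules.
-/

universe u

/-- A bundled finitely generated module over `R`. -/
structure FGModuleRep (R : Type u) [CommRing R] : Type (u + 1) where
  carrier : Type u
  [isAddCommGroup : AddCommGroup carrier]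
  [isModule : Module R carrier]
  [isFinite : Module.Finite R carrier]

attribute [instance] FGModuleRep.isAddCommGroup FGModuleRep.isModule FGModuleRep.isFinite

variable (R : Type u) [CommRing R]

/-- The subgroup of relations coming from short exact sequences of f.g. modules. -/
def sesRelations : AddSubgroup (FreeAbelianGroup (FGModuleRep R)) :=
  AddSubgroup.closure
    { z | ∃ (M₁ M₂ M₃ : FGModuleRep R) (f : M₁.carrier →ₗ[R] M₂.carrier)
        (g : M₂.carrier →ₗ[R] M₃.carrier),
        Function.Injective f ∧ Function.Surjective g ∧
        LinearMap.range f = LinearMap.ker g ∧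
        z = FreeAbelianGroup.of M₂ - FreeAbelianGroup.of M₁ - FreeAbelianGroup.of M₃ }

/-- The Grothendieck group of finitely generated `R`-modules. -/
def GGroup : Type (u + 1) :=
  FreeAbelianGroup (FGModuleRep R) ⧸ sesRelations R

noncomputable instance : AddCommGroup (GGroup R) :=
  QuotientAddGroup.Quotient.addCommGroup _

/-- The class of a finitely generated module in the Grothendieck group. -/
def GGroup.cls (M : Type u) [AddCommGroup M] [Module R M] [Module.Finite R M] : GGroup R :=
  QuotientAddGroup.mk (FreeAbelianGroup.of ⟨M⟩)

noncomputable section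

open MvPowerSeries

/-- The power series `x² + y² − (w+1)z² ∈ ℝ[[x,y,z,w]]`
(with `x = X 0`, `y = X 1`, `z = X 2`, `w = X 3`). -/
def quadSeries : MvPowerSeries (Fin 4) ℝ :=
  X 0 ^ 2 + X 1 ^ 2 - (X 3 + 1) * X 2 ^ 2

/-- The complete local ring `R̂ = ℝ[[x,y,z,w]]/(x² + y² − (w+1)z²)`. -/
def Rhat : Type := MvPowerSeries (Fin 4) ℝ ⧸ Ideal.span {quadSeries}

instance : CommRing Rhat := by unfold Rhat; infer_instance

/-- The images `x`, `y`, `z`, `w` of the four variables in `R̂`. -/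
def xh : Rhat := Ideal.Quotient.mk _ (X 0)
def yh : Rhat := Ideal.Quotient.mk _ (X 1)
def zh : Rhat := Ideal.Quotient.mk _ (X 2)
def wh : Rhat := Ideal.Quotient.mk _ (X 3)

/-- The ideal `P R̂ = (x, y, z)` of `R̂`. -/
def Phat : Ideal Rhat := Ideal.span {xh, yh, zh}

/-- `R̂/PR̂` is a finitely generated `R̂`-module (found automatically by the older library). -/
instance : Module.Finite Rhat (Rhat ⧸ Phat) :=
  Module.Finite.of_surjective (Algebra.linearMap Rhat (Rhat ⧸ Phat)) Ideal.Quotient.mk_surjective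



noncomputable def sqA : ℕ → ℝ
  | 0 => 1
  | (n+1) => ((if n = 0 then 1 else 0)
      - ∑ i ∈ (Finset.range n).attach, sqA (i+1) * sqA (n - i)) / 2
  decreasing_by
  all_goals (have := i.2; simp only [Finset.mem_range] at this; omega)

theorem sqA_zero : sqA 0 = 1 := by rw [sqA]

theorem sqA_conv (n : ℕ) :
    ∑ k ∈ Finset.range (n+1), sqA k * sqA (n - k)
      = if n = 0 then 1 else if n = 1 then 1 else 0 := by
  match n with
  | 0 => simp [sqA_zero]
  | (m+1) =>
    rw [Finset.sum_range_succ', Finset.sum_range_succ]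
    have hA : sqA (m+1) = ((if m = 0 then 1 else 0)
        - ∑ i ∈ (Finset.range m).attach, sqA (i+1) * sqA (m - i)) / 2 := by
      rw [sqA]
    have hT : ∑ i ∈ (Finset.range m).attach, sqA (↑i+1) * sqA (m - ↑i)
        = ∑ i ∈ Finset.range m, sqA (i+1) * sqA (m - i) := by
      rw [Finset.sum_attach (Finset.range m) (fun i => sqA (i+1) * sqA (m - i))]
    have h1 : ∀ i ∈ Finset.range m, sqA (i+1) * sqA (m+1-(i+1)) = sqA (i+1) * sqA (m-i) := by
      intro i _; congr 2; omega
    rw [Finset.sum_congr rfl h1]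
    rw [hT] at hA
    simp only [Nat.sub_self, sqA_zero, Nat.succ_ne_zero, if_false]
    have : m + 1 - 0 = m + 1 := rfl
    rw [this]
    rw [hA]
    by_cases hm : m = 0 <;> simp [hm] <;> ring

/-- `√(1+w)` as a multivariate power series in the variable `X 3`. -/
noncomputable def sqrtW : MvPowerSeries (Fin 4) ℝ :=
  fun d => if d = Finsupp.single 3 (d 3) then sqA (d 3) else 0

theorem coeff_sqrtW (d : Fin 4 →₀ ℕ) :
    coeff d sqrtW = if d = Finsupp.single 3 (d 3) then sqA (d 3) else 0 := rfl

theorem coeff_sqrtW_single (n : ℕ) :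
    coeff (Finsupp.single 3 n) sqrtW = sqA n := by
  rw [coeff_sqrtW]
  simp [Finsupp.single_eq_same]

theorem sqrtW_sq : sqrtW * sqrtW = X 3 + 1 := by
  classical
  ext d
  rw [coeff_mul]
  by_cases hd : d = Finsupp.single 3 (d 3)
  · rw [hd]
    rw [Finsupp.antidiagonal_single, Finset.sum_map]
    simp only [Function.Embedding.coe_prodMap, Prod.map, Function.Embedding.coeFn_mk]
    have : ∀ p ∈ Finset.HasAntidiagonal.antidiagonal (d 3),
        coeff (Finsupp.single 3 p.1) sqrtW * coeff (Finsupp.single 3 p.2) sqrtW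
          = sqA p.1 * sqA p.2 := by
      intro p _; rw [coeff_sqrtW_single, coeff_sqrtW_single]
    rw [Finset.sum_congr rfl this]
    rw [Finset.Nat.sum_antidiagonal_eq_sum_range_succ (fun i j => sqA i * sqA j)]
    rw [sqA_conv]
    rw [map_add, coeff_X, coeff_one]
    have h1 : (Finsupp.single 3 (d 3) = Finsupp.single (3 : Fin 4) 1) ↔ d 3 = 1 := by
      constructor
      · intro h
        have := DFunLike.congr_fun h 3
        simpa using this
      · intro h; rw [h]
    have h0 : (Finsupp.single (3 : Fin 4) (d 3) = 0) ↔ d 3 = 0 := by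
      rw [Finsupp.single_eq_zero]
    by_cases hz : d 3 = 0
    · simp [hz, h1, h0, Finsupp.single_eq_zero, eq_comm]
    · by_cases ho : d 3 = 1 <;> simp [hz, ho, h1, h0, Finsupp.single_eq_zero]
  · -- all terms vanish
    have hterm : ∀ p ∈ Finset.HasAntidiagonal.antidiagonal d,
        coeff p.1 sqrtW * coeff p.2 sqrtW = 0 := by
      rintro ⟨p, q⟩ hpq
      rw [Finset.HasAntidiagonal.mem_antidiagonal] at hpq
      rw [coeff_sqrtW, coeff_sqrtW]
      by_cases hp : p = Finsupp.single 3 (p 3)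
      · by_cases hq : q = Finsupp.single 3 (q 3)
        · exfalso
          apply hd
          have hpq' : p + q = d := hpq
          have hd' : d = Finsupp.single 3 (p 3 + q 3) := by
            rw [← hpq', Finsupp.single_add, ← hp, ← hq]
          have hd3 : d 3 = p 3 + q 3 := by
            rw [hd', Finsupp.single_eq_same]
          rw [hd']
          rw [Finsupp.single_eq_same]
        · simp [hq]
      · simp [hp]
    rw [Finset.sum_eq_zero hterm]
    rw [map_add, coeff_X, coeff_one]
    have hX : d ≠ Finsupp.single 3 1 := by
      intro h; apply hd; rw [h]; simp [Finsupp.single_eq_same]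
    have h0 : d ≠ 0 := by
      intro h; apply hd; rw [h]; simp
    simp [hX, h0]

theorem constantCoeff_sqrtW : (constantCoeff (σ := Fin 4) (R := ℝ)) sqrtW = 1 := by
  have : (constantCoeff (σ := Fin 4) (R := ℝ)) sqrtW = coeff 0 sqrtW := rfl
  rw [this]
  have h0 : (0 : Fin 4 →₀ ℕ) = Finsupp.single 3 0 := by simp
  rw [h0, coeff_sqrtW_single, sqA_zero]

theorem sqrtW_ne_zero : sqrtW ≠ 0 := by
  intro h
  have := constantCoeff_sqrtW
  rw [h] at this
  simp at this


/-- Kill all monomials involving a variable from `T` (bare function). -/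
noncomputable def projFun (T : Finset (Fin 4)) (f : MvPowerSeries (Fin 4) ℝ) :
    MvPowerSeries (Fin 4) ℝ :=
  fun d => if ∀ i ∈ T, d i = 0 then f d else 0

theorem projFun_apply (T : Finset (Fin 4)) (f : MvPowerSeries (Fin 4) ℝ) (d : Fin 4 →₀ ℕ) :
    projFun T f d = if ∀ i ∈ T, d i = 0 then f d else 0 := rfl

/-- Kill all monomials involving a variable from `T`. -/
noncomputable def projAway (T : Finset (Fin 4)) :
    MvPowerSeries (Fin 4) ℝ →+* MvPowerSeries (Fin 4) ℝ where
  toFun := projFun T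
  map_one' := by
    classical
    funext d
    show projFun T 1 d = (1 : MvPowerSeries (Fin 4) ℝ) d
    rw [projFun_apply]
    by_cases h : ∀ i ∈ T, d i = 0
    · rw [if_pos h]
    · rw [if_neg h]
      have hd : d ≠ 0 := by
        intro h0; apply h; intro i _; rw [h0]; rfl
      rw [show (1 : MvPowerSeries (Fin 4) ℝ) d = coeff d 1 from rfl, coeff_one, if_neg hd]
  map_mul' := by
    classical
    intro f g
    funext d
    have key : ∀ (u v : MvPowerSeries (Fin 4) ℝ) (e : Fin 4 →₀ ℕ),
        (u * v) e = ∑ p ∈ Finset.HasAntidiagonal.antidiagonal e, u p.1 * v p.2 := by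
      intro u v e; exact coeff_mul e u v
    show projFun T (f * g) d = (projFun T f * projFun T g) d
    rw [show (projFun T (f * g)) d = if ∀ i ∈ T, d i = 0 then (f * g) d else 0 from rfl]
    by_cases h : ∀ i ∈ T, d i = 0
    · rw [if_pos h, key, key (projFun T f) (projFun T g)]
      apply Finset.sum_congr rfl
      rintro ⟨p, q⟩ hpq
      rw [Finset.HasAntidiagonal.mem_antidiagonal] at hpq
      have hp : ∀ i ∈ T, p i = 0 := by
        intro i hi
        have : p i + q i = d i := by
          rw [← hpq]; rfl
        have := h i hi; omega
      have hq : ∀ i ∈ T, q i = 0 := by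
        intro i hi
        have : p i + q i = d i := by
          rw [← hpq]; rfl
        have := h i hi; omega
      rw [projFun_apply, projFun_apply, if_pos hp, if_pos hq]
    · rw [if_neg h, key (projFun T f) (projFun T g)]
      symm
      apply Finset.sum_eq_zero
      rintro ⟨p, q⟩ hpq
      rw [Finset.HasAntidiagonal.mem_antidiagonal] at hpq
      push_neg at h
      obtain ⟨i, hiT, hdi⟩ := h
      have hsum : p i + q i = d i := by rw [← hpq]; rfl
      rw [projFun_apply, projFun_apply]
      by_cases hp : ∀ j ∈ T, p j = 0
      · have : ¬ ∀ j ∈ T, q j = 0 := by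
          intro hq
          apply hdi
          rw [← hsum, hp i hiT, hq i hiT]
        rw [if_pos hp, if_neg this, mul_zero]
      · rw [if_neg hp, zero_mul]
  map_zero' := by
    funext d
    show projFun T 0 d = (0 : MvPowerSeries (Fin 4) ℝ) d
    rw [projFun_apply]
    by_cases h : ∀ i ∈ T, d i = 0
    · rw [if_pos h]
    · rw [if_neg h]; rfl
  map_add' := by
    intro f g
    funext d
    show projFun T (f + g) d = (projFun T f + projFun T g) d
    rw [show ((projFun T f + projFun T g) d)
        = projFun T f d + projFun T g d from rfl]
    rw [projFun_apply, projFun_apply, projFun_apply]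
    by_cases h : ∀ i ∈ T, d i = 0
    · rw [if_pos h, if_pos h, if_pos h]; rfl
    · rw [if_neg h, if_neg h, if_neg h, add_zero]

theorem projAway_apply (T : Finset (Fin 4)) (f : MvPowerSeries (Fin 4) ℝ) (d : Fin 4 →₀ ℕ) :
    coeff d (projAway T f) = if ∀ i ∈ T, d i = 0 then coeff d f else 0 := rfl

theorem projAway_eq_self (T : Finset (Fin 4)) (f : MvPowerSeries (Fin 4) ℝ)
    (hf : ∀ d, coeff d f ≠ 0 → ∀ i ∈ T, d i = 0) :
    projAway T f = f := by
  ext d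
  rw [projAway_apply]
  by_cases h : ∀ i ∈ T, d i = 0
  · rw [if_pos h]
  · rw [if_neg h]
    by_contra hne
    exact h (hf d (fun hz => hne hz.symm))

theorem projAway_X_mem (T : Finset (Fin 4)) (i : Fin 4) (hi : i ∈ T) :
    projAway T (X i) = 0 := by
  ext d
  rw [projAway_apply]
  by_cases h : ∀ j ∈ T, d j = 0
  · rw [if_pos h, coeff_X]
    have : d ≠ Finsupp.single i 1 := by
      intro he
      have := h i hi
      rw [he, Finsupp.single_eq_same] at this
      exact one_ne_zero this
    rw [if_neg this]; simp
  · rw [if_neg h]; simp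

theorem projAway_X_not_mem (T : Finset (Fin 4)) (i : Fin 4) (hi : i ∉ T) :
    projAway T (X i) = X i := by
  apply projAway_eq_self
  intro d hd j hj
  rw [coeff_X] at hd
  have hdi : d = Finsupp.single i 1 := by
    by_contra hne; rw [if_neg hne] at hd; exact hd rfl
  rw [hdi, Finsupp.single_apply, if_neg]
  intro he; rw [he] at hi; exact hi hj

theorem projAway_ker_single (f : MvPowerSeries (Fin 4) ℝ) (i : Fin 4)
    (hf : projAway {i} f = 0) : X i ∣ f := by
  rw [X_dvd_iff]
  intro m hm
  have := congrFun hf m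
  have hc : ∀ j ∈ ({i} : Finset (Fin 4)), m j = 0 := by
    intro j hj; rw [Finset.mem_singleton] at hj; rw [hj]; exact hm
  rw [show (projAway {i} f) m = if ∀ j ∈ ({i} : Finset (Fin 4)), m j = 0 then coeff m f else 0 from rfl, if_pos hc] at this
  exact this

theorem projAway_ker_pair (f : MvPowerSeries (Fin 4) ℝ)
    (hf : projAway {0, 1} f = 0) : f ∈ Ideal.span {X (0 : Fin 4), (X 1 : MvPowerSeries (Fin 4) ℝ)} := by
  classical
  set g : MvPowerSeries (Fin 4) ℝ := fun d => if d 0 = 0 then f d else 0 with hg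
  have hXg : X (1 : Fin 4) ∣ g := by
    rw [X_dvd_iff]
    intro m hm
    show (if m 0 = 0 then f m else 0) = 0
    by_cases h0 : m 0 = 0
    · rw [if_pos h0]
      have := congrFun hf m
      have hc : ∀ j ∈ ({0, 1} : Finset (Fin 4)), m j = 0 := by
        intro j hj
        rcases Finset.mem_insert.mp hj with h | h
        · rw [h]; exact h0
        · rw [Finset.mem_singleton] at h; rw [h]; exact hm
      rw [show (projAway {0,1} f) m = if ∀ j ∈ ({0,1} : Finset (Fin 4)), m j = 0 then coeff m f else 0 from rfl, if_pos hc] at this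
      exact this
    · rw [if_neg h0]
  have hXh : X (0 : Fin 4) ∣ (f - g) := by
    rw [X_dvd_iff]
    intro m hm
    show f m - (if m 0 = 0 then f m else 0) = 0
    rw [if_pos hm, sub_self]
  obtain ⟨u, hu⟩ := hXh
  obtain ⟨v, hv⟩ := hXg
  rw [Ideal.mem_span_pair]
  refine ⟨u, v, ?_⟩
  have : f = X 0 * u + X 1 * v := by
    rw [← hu, ← hv]; ring
  rw [this]; ring

local notation "Aps" => MvPowerSeries (Fin 4) ℝ

noncomputable def c1 : Aps := sqrtW * X 2 - X 0
noncomputable def c2 : Aps := sqrtW * X 2 + X 0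

theorem X_ne_zero' (i : Fin 4) : (X i : Aps) ≠ 0 := by
  intro h
  have : coeff (Finsupp.single i 1) (X i : Aps) = 0 := by rw [h]; simp
  rw [coeff_X, if_pos rfl] at this
  exact one_ne_zero this

theorem projAway_sqrtW (T : Finset (Fin 4)) (h3 : (3 : Fin 4) ∉ T) :
    projAway T sqrtW = sqrtW := by
  apply projAway_eq_self
  intro d hd i hi
  have hds : d = Finsupp.single 3 (d 3) := by
    by_contra hne
    rw [coeff_sqrtW, if_neg hne] at hd
    exact hd rfl
  rw [hds, Finsupp.single_apply, if_neg]
  intro he; rw [he] at h3; exact h3 hi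

theorem core_colon (r : Aps) (h : c2 * r ∈ Ideal.span {c1, (X 1 : Aps)}) :
    r ∈ Ideal.span {c1, (X 1 : Aps)} := by
  obtain ⟨α, β, hab⟩ := Ideal.mem_span_pair.mp h
  unfold c1 c2 at *
  set s := sqrtW with hs
  -- step 1
  have e2 : X 0 * (2 * r) - X 1 * β = (α - r) * (s * X 2 - X 0) := by
    linear_combination -hab
  -- step 2: project away x and y
  have h3 : (0:Aps) = projAway {0, 1} (α - r) * (s * X 2) := by
    have := congrArg (projAway {0, 1}) e2
    simp only [map_sub, map_mul] at this
    rw [projAway_X_mem _ 0 (by decide), projAway_X_mem _ 1 (by decide),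
      projAway_sqrtW _ (by decide), projAway_X_not_mem _ 2 (by decide)] at this
    rw [sub_zero, ← map_sub] at this
    rw [← this]
    ring
  have h4 : projAway {0, 1} (α - r) = 0 := by
    rcases mul_eq_zero.mp h3.symm with h | h
    · exact h
    · exact absurd h (mul_ne_zero sqrtW_ne_zero (X_ne_zero' 2))
  obtain ⟨μ, ν, hμν⟩ := Ideal.mem_span_pair.mp (projAway_ker_pair _ h4)
  -- step 3
  have e6 : X 0 * (2 * r - μ * (s * X 2 - X 0)) = X 1 * (ν * (s * X 2 - X 0) + β) := by
    linear_combination e2 - (s * X 2 - X 0) * hμν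
  -- step 4: project away x
  have h7 : (0:Aps) = X 1 * projAway {0} (ν * (s * X 2 - X 0) + β) := by
    have := congrArg (projAway {0}) e6
    rw [map_mul, map_mul, projAway_X_mem _ 0 (by decide),
      projAway_X_not_mem _ 1 (by decide), zero_mul] at this
    exact this
  have h8 : projAway {0} (ν * (s * X 2 - X 0) + β) = 0 := by
    rcases mul_eq_zero.mp h7.symm with h | h
    · exact absurd h (X_ne_zero' 1)
    · exact h
  obtain ⟨τ, hτ⟩ := projAway_ker_single _ 0 h8
  -- step 5: cancel x
  have e9 : X 0 * (2 * r - μ * (s * X 2 - X 0) - X 1 * τ) = 0 := by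
    rw [hτ] at e6
    linear_combination e6
  have e10 : 2 * r - μ * (s * X 2 - X 0) - X 1 * τ = 0 :=
    (mul_eq_zero.mp e9).resolve_left (X_ne_zero' 0)
  -- step 6: divide by 2
  have h2 : ((MvPowerSeries.C (σ := Fin 4) (R := ℝ))) (1/2 : ℝ) * 2 = 1 := by
    rw [← map_ofNat ((MvPowerSeries.C (σ := Fin 4) (R := ℝ))) 2, ← map_mul]
    norm_num
  rw [Ideal.mem_span_pair]
  refine ⟨(MvPowerSeries.C (σ := Fin 4) (R := ℝ)) (1/2 : ℝ) * μ, (MvPowerSeries.C (σ := Fin 4) (R := ℝ)) (1/2 : ℝ) * τ, ?_⟩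
  linear_combination (-((MvPowerSeries.C (σ := Fin 4) (R := ℝ)) (1/2 : ℝ))) * e10 + r * h2

-- ======== descent to Rhat ========

abbrev mkA : MvPowerSeries (Fin 4) ℝ →+* Rhat := Ideal.Quotient.mk (Ideal.span {quadSeries})

def c1h : Rhat := mkA c1
def c2h : Rhat := mkA c2

/-- The ideal `(c₁, y)` of `R̂`. -/
def Jh : Ideal Rhat := Ideal.span {c1h, yh}

theorem quad_eq : quadSeries = X 1 * X 1 - c1 * c2 := by
  unfold quadSeries c1 c2
  linear_combination (X 2 : Aps) * (X 2 : Aps) * sqrtW_sq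

theorem key_colon (ρ : Rhat) (h : c2h * ρ ∈ Jh) : ρ ∈ Jh := by
  obtain ⟨a, rfl⟩ := Ideal.Quotient.mk_surjective ρ
  obtain ⟨u, v, huv⟩ := Ideal.mem_span_pair.mp h
  obtain ⟨u0, rfl⟩ := Ideal.Quotient.mk_surjective u
  obtain ⟨v0, rfl⟩ := Ideal.Quotient.mk_surjective v
  have hz : mkA (u0 * c1 + v0 * X 1 - c2 * a) = 0 := by
    rw [map_sub, map_add, map_mul, map_mul, map_mul]
    rw [show mkA c1 = c1h from rfl, show mkA (X 1) = yh from rfl,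
      show mkA c2 = c2h from rfl]
    have huv' : mkA u0 * c1h + mkA v0 * yh = c2h * mkA a := huv
    rw [huv']
    ring
  have hz' : Ideal.Quotient.mk (Ideal.span {quadSeries}) (u0 * c1 + v0 * X 1 - c2 * a) = 0 := hz
  rw [Ideal.Quotient.eq_zero_iff_mem, Ideal.mem_span_singleton] at hz'
  obtain ⟨t, ht⟩ := hz'
  have hmem : c2 * a ∈ Ideal.span {c1, (X 1 : Aps)} := by
    rw [Ideal.mem_span_pair]
    refine ⟨u0 + c2 * t, v0 - X 1 * t, ?_⟩
    have hq := quad_eq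
    linear_combination ht + t * hq
  have := core_colon a hmem
  have hJ : Ideal.map mkA (Ideal.span {c1, (X 1 : Aps)}) = Jh := by
    rw [Ideal.map_span]
    unfold Jh
    congr 1
    rw [Set.image_insert_eq, Set.image_singleton]
    rfl
  rw [← hJ]
  exact Ideal.mem_map_of_mem mkA this

theorem J_le_P : Jh ≤ Phat := by
  have hx : xh ∈ Phat := Ideal.subset_span (by simp)
  have hy : yh ∈ Phat := Ideal.subset_span (by simp)
  have hz : zh ∈ Phat := Ideal.subset_span (by simp)
  unfold Jh
  rw [Ideal.span_le]
  rintro w hw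
  rcases hw with h | h
  · rw [h]
    show mkA c1 ∈ Phat
    have : mkA c1 = mkA sqrtW * zh - xh := by
      unfold c1
      rw [map_sub, map_mul]
      rfl
    rw [this]
    exact sub_mem (Ideal.mul_mem_left _ _ hz) hx
  · rw [Set.mem_singleton_iff] at h
    rw [h]
    exact hy

theorem sup_eq_P : Jh ⊔ Ideal.span {c2h} = Phat := by
  have h2 : ((MvPowerSeries.C (σ := Fin 4) (R := ℝ))) (1/2 : ℝ) * 2 = 1 := by
    rw [← map_ofNat ((MvPowerSeries.C (σ := Fin 4) (R := ℝ))) 2, ← map_mul]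
    norm_num
  have hx : xh ∈ Phat := Ideal.subset_span (by simp)
  have hy : yh ∈ Phat := Ideal.subset_span (by simp)
  have hz : zh ∈ Phat := Ideal.subset_span (by simp)
  apply le_antisymm
  · rw [sup_le_iff]
    constructor
    · exact J_le_P
    · rw [Ideal.span_le]
      rintro w hw
      rw [Set.mem_singleton_iff] at hw
      rw [hw]
      show mkA c2 ∈ Phat
      have : mkA c2 = mkA sqrtW * zh + xh := by
        unfold c2
        rw [map_add, map_mul]
        rfl
      rw [this]
      exact add_mem (Ideal.mul_mem_left _ _ hz) hx
  · unfold Phat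
    rw [Ideal.span_le]
    have hc1 : c1h ∈ Jh ⊔ Ideal.span {c2h} :=
      Submodule.mem_sup_left (Ideal.subset_span (by simp))
    have hyy : yh ∈ Jh ⊔ Ideal.span {c2h} :=
      Submodule.mem_sup_left (Ideal.subset_span (by simp))
    have hc2 : c2h ∈ Jh ⊔ Ideal.span {c2h} :=
      Submodule.mem_sup_right (Ideal.subset_span rfl)
    rintro w hw
    rcases hw with h | h
    · -- xh
      rw [h]
      have hup : (MvPowerSeries.C (σ := Fin 4) (R := ℝ)) (1/2 : ℝ) * c2
          - (MvPowerSeries.C (σ := Fin 4) (R := ℝ)) (1/2 : ℝ) * c1 = X 0 := by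
        unfold c1 c2
        linear_combination (X 0 : Aps) * h2
      have : mkA ((MvPowerSeries.C (σ := Fin 4) (R := ℝ)) (1/2 : ℝ)) * c2h
          - mkA ((MvPowerSeries.C (σ := Fin 4) (R := ℝ)) (1/2 : ℝ)) * c1h = xh := by
        show mkA _ * mkA c2 - mkA _ * mkA c1 = xh
        rw [← map_mul, ← map_mul, ← map_sub, hup]
        rfl
      rw [← this]
      exact sub_mem (Ideal.mul_mem_left _ _ hc2) (Ideal.mul_mem_left _ _ hc1)
    · rcases h with h | h
      · rw [h]; exact hyy
      · -- zh
        rw [Set.mem_singleton_iff] at h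
        rw [h]
        set sinv : Aps := MvPowerSeries.invOfUnit sqrtW 1 with hsinv
        have hs1 : sqrtW * sinv = 1 :=
          MvPowerSeries.mul_invOfUnit sqrtW 1 (by rw [constantCoeff_sqrtW]; rfl)
        have hup : ((MvPowerSeries.C (σ := Fin 4) (R := ℝ)) (1/2 : ℝ) * sinv) * c1
            + ((MvPowerSeries.C (σ := Fin 4) (R := ℝ)) (1/2 : ℝ) * sinv) * c2 = X 2 := by
          unfold c1 c2
          linear_combination (sinv * sqrtW * (X 2 : Aps)) * h2 + (X 2 : Aps) * hs1
        have : mkA ((MvPowerSeries.C (σ := Fin 4) (R := ℝ)) (1/2 : ℝ) * sinv) * c1h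
            + mkA ((MvPowerSeries.C (σ := Fin 4) (R := ℝ)) (1/2 : ℝ) * sinv) * c2h = zh := by
          show mkA _ * mkA c1 + mkA _ * mkA c2 = zh
          rw [← map_mul, ← map_mul, ← map_add, hup]
          rfl
        rw [← this]
        exact add_mem (Ideal.mul_mem_left _ _ hc1) (Ideal.mul_mem_left _ _ hc2)

-- ======== the short exact sequence ========

instance : @Module Rhat Rhat Ring.toSemiring AddCommGroup.toAddCommMonoid := Semiring.toModule

abbrev Nmod : Type := Rhat ⧸ Jh

instance : Module.Finite Rhat Nmod :=
  Module.Finite.of_surjective (Algebra.linearMap Rhat Nmod) Ideal.Quotient.mk_surjective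

/-- multiplication by `c₂` on `R̂/(c₁,y)`. -/
noncomputable def fmap : Nmod →ₗ[Rhat] Nmod :=
  Submodule.mapQ Jh Jh (LinearMap.lsmul Rhat Rhat c2h)
    (fun j hj => by
      show c2h • j ∈ Jh
      exact Ideal.mul_mem_left _ _ hj)

/-- the projection `R̂/(c₁,y) → R̂/P`. -/
noncomputable def gmap : Nmod →ₗ[Rhat] (Rhat ⧸ Phat) :=
  Submodule.mapQ Jh Phat LinearMap.id (fun j hj => J_le_P hj)

theorem fmap_mk (r : Rhat) :
    fmap (Submodule.Quotient.mk r) = Submodule.Quotient.mk (c2h * r) :=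
  Submodule.mapQ_apply _ _ _ r

theorem gmap_mk (r : Rhat) :
    gmap (Submodule.Quotient.mk r) = Submodule.Quotient.mk r :=
  Submodule.mapQ_apply _ _ _ r

theorem fmap_inj : Function.Injective fmap := by
  rw [← LinearMap.ker_eq_bot]
  rw [Submodule.eq_bot_iff]
  intro a ha
  rw [LinearMap.mem_ker] at ha
  obtain ⟨r, rfl⟩ := Submodule.mkQ_surjective Jh a
  erw [Submodule.mkQ_apply] at ha ⊢
  change (Submodule.Quotient.mk (c2h * r) : Nmod) = 0 at ha
  erw [Submodule.Quotient.mk_eq_zero] at ha ⊢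
  exact key_colon r ha

theorem gmap_surj : Function.Surjective gmap := by
  intro b
  obtain ⟨r, rfl⟩ := Submodule.mkQ_surjective Phat b
  refine ⟨Submodule.Quotient.mk r, ?_⟩
  show gmap (Submodule.Quotient.mk r) = Submodule.Quotient.mk r
  exact gmap_mk r

theorem range_eq_ker : LinearMap.range fmap = LinearMap.ker gmap := by
  ext a
  obtain ⟨r, rfl⟩ := Submodule.mkQ_surjective Jh a
  erw [Submodule.mkQ_apply]
  rw [LinearMap.mem_ker]
  rw [gmap_mk]
  erw [Submodule.Quotient.mk_eq_zero]
  constructor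
  · rintro ⟨b, hb⟩
    obtain ⟨u, rfl⟩ := Submodule.mkQ_surjective Jh b
    change fmap (Submodule.Quotient.mk u) = _ at hb
    rw [fmap_mk] at hb; erw [Submodule.Quotient.eq] at hb
    rw [← sup_eq_P]
    have : r = -(c2h * u - r) + u * c2h := by
      ring
    rw [this]
    apply Submodule.add_mem
    · exact Submodule.mem_sup_left (Submodule.neg_mem _ hb)
    · exact Submodule.mem_sup_right (Ideal.mem_span_singleton'.mpr ⟨u, rfl⟩)
  · intro hr
    rw [← sup_eq_P] at hr
    obtain ⟨j, hj, v, hv, hjv⟩ := Submodule.mem_sup.mp hr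
    obtain ⟨u, hu⟩ := Ideal.mem_span_singleton'.mp hv
    refine ⟨Submodule.Quotient.mk u, ?_⟩
    rw [fmap_mk]
    erw [Submodule.Quotient.eq]
    have : c2h * u - r = -j := by
      rw [← hjv, ← hu]
      ring
    rw [this]
    exact Submodule.neg_mem _ hj

/-- `[R̂/PR̂] = 0` in `G(R̂)`. -/
theorem class_of_quotient_vanishes_in_completion :
    GGroup.cls Rhat (Rhat ⧸ Phat) = 0 := by
  have hrel : (FreeAbelianGroup.of (⟨Nmod⟩ : FGModuleRep Rhat)
      - FreeAbelianGroup.of (⟨Nmod⟩ : FGModuleRep Rhat)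
      - FreeAbelianGroup.of (⟨Rhat ⧸ Phat⟩ : FGModuleRep Rhat)) ∈ sesRelations Rhat :=
    AddSubgroup.subset_closure
      ⟨⟨Nmod⟩, ⟨Nmod⟩, ⟨Rhat ⧸ Phat⟩, fmap, gmap, fmap_inj, gmap_surj, range_eq_ker, rfl⟩
  have hmem : FreeAbelianGroup.of (⟨Rhat ⧸ Phat⟩ : FGModuleRep Rhat)
      ∈ sesRelations Rhat := by
    have := (sesRelations Rhat).neg_mem hrel
    simpa using this
  show QuotientAddGroup.mk _ = 0
  exact (QuotientAddGroup.eq_zero_iff _).mpr hmem
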